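/- Let G be a second-order differential operator on functions of (c,x,y) ∈ ℝ^{2+d}, and suppose G maps Pol_n (polynomials of degree ≤ n) into Pol_n for all n. Augment G with a jump part: (G_J f)(c,x,y) = (G f)(c,x,y) + λ ∫_S [ f(c, x + (x − 1ᵀy/a)z, y) − f(c,x,y) − (x − 1ᵀy/a)·z·f_x(c,x,y) ] F(dz), where λ ≥ 0, a > 0, and F is a probability measure on S ⊆ (−1,∞) with finite moments of all orders. Then G_J also maps Pol_n into Pol_n for every n. -/

import Mathlib

open MeasureTheory MvPolynomial

noncomputable section

/-- The set of functions on `ℝ^(d+2)` (coordinates `c` = index 0, `x` = index 1,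
`y_k` = index `k+2`) given by polynomials of total degree at most `n`. -/
def PolFun (d n : ℕ) : Set ((Fin (d + 2) → ℝ) → ℝ) :=
  {f | ∃ p : MvPolynomial (Fin (d + 2)) ℝ, p.totalDegree ≤ n ∧
    f = fun v => MvPolynomial.eval v p}

/-- The jump part added to a generator: compensated compound-Poisson jumps of the
stock price with amplitude `(x, y) ↦ x + (x − 1ᵀy/a)·z`, `z ∼ F`. Here `f_x` is
the partial derivative in the `x`-coordinate (index 1). -/
def jumpPart (d : ℕ) (a lam : ℝ) (F : Measure ℝ)
    (f : (Fin (d + 2) → ℝ) → ℝ) : (Fin (d + 2) → ℝ) → ℝ :=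
  fun v => lam * ∫ z,
    (f (Function.update v 1 (v 1 + (v 1 - (∑ k : Fin d, v k.succ.succ) / a) * z))
      - f v
      - (v 1 - (∑ k : Fin d, v k.succ.succ) / a) * z * fderiv ℝ f v (Pi.single 1 1)) ∂F


theorem hasFDerivAt_mveval {N : ℕ} (p : MvPolynomial (Fin N) ℝ) (v : Fin N → ℝ) :
    HasFDerivAt (fun w => eval w p)
      (∑ i : Fin N, eval v (pderiv i p) • (ContinuousLinearMap.proj i : (Fin N → ℝ) →L[ℝ] ℝ)) v := by
  induction p using MvPolynomial.induction_on with
  | C c => simpa using hasFDerivAt_const c v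
  | add p q hp hq =>
      have := hp.add hq
      simp only [map_add, eval_add] at this ⊢
      refine this.congr_fderiv (Eq.symm ?_)
      simp [add_smul, Finset.sum_add_distrib]
  | mul_X p j hp =>
      have hj : HasFDerivAt (fun w : Fin N → ℝ => w j)
          (ContinuousLinearMap.proj j : (Fin N → ℝ) →L[ℝ] ℝ) v := by
        exact (ContinuousLinearMap.proj (R := ℝ) (φ := fun _ : Fin N => ℝ) j).hasFDerivAt
      have := hp.mul hj
      simp only [eval_mul, eval_X] at this ⊢
      refine this.congr_fderiv (Eq.symm ?_)
      rw [Finset.smul_sum]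
      have : ∀ i : Fin N, eval v (pderiv i (p * X j)) • (ContinuousLinearMap.proj i : (Fin N → ℝ) →L[ℝ] ℝ)
          = (if i = j then eval v p • (ContinuousLinearMap.proj j : (Fin N → ℝ) →L[ℝ] ℝ) else 0)
            + v j • eval v (pderiv i p) • ContinuousLinearMap.proj i := by
        intro i
        rcases eq_or_ne i j with rfl | hne
        · simp [pderiv_mul, pderiv_X_self, smul_smul, add_smul, mul_comm]
        · simp [pderiv_mul, Pi.single_eq_of_ne hne.symm, smul_smul, mul_comm, hne]
      rw [Finset.sum_congr rfl fun i _ => this i, Finset.sum_add_distrib, Finset.sum_ite_eq']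
      simp [add_comm]

theorem fderiv_mveval_single {N : ℕ} (p : MvPolynomial (Fin N) ℝ) (v : Fin N → ℝ) (i : Fin N) :
    fderiv ℝ (fun w => eval w p) v (Pi.single i 1) = eval v (pderiv i p) := by
  rw [(hasFDerivAt_mveval p v).fderiv]
  simp [ContinuousLinearMap.sum_apply, ContinuousLinearMap.proj_apply, Pi.single_apply,
    mul_ite, Finset.sum_ite_eq]

def Wp (d : ℕ) (a : ℝ) : MvPolynomial (Fin (d + 2)) ℝ :=
  X 1 - C a⁻¹ * ∑ k : Fin d, X k.succ.succ

def gsub (d : ℕ) (a : ℝ) : Fin (d + 2) → Polynomial (MvPolynomial (Fin (d + 2)) ℝ) :=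
  fun i => if i = 1 then Polynomial.C (X 1) + Polynomial.C (Wp d a) * Polynomial.X
    else Polynomial.C (X i)

def Asub (d : ℕ) (a : ℝ) (p : MvPolynomial (Fin (d + 2)) ℝ) :
    Polynomial (MvPolynomial (Fin (d + 2)) ℝ) := aeval (gsub d a) p

theorem eval_Wp {d : ℕ} (a : ℝ) (v : Fin (d + 2) → ℝ) :
    eval v (Wp d a) = v 1 - (∑ k : Fin d, v k.succ.succ) / a := by
  simp [Wp, div_eq_inv_mul]

theorem eval_Asub {d : ℕ} (a : ℝ) (p : MvPolynomial (Fin (d + 2)) ℝ)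
    (v : Fin (d + 2) → ℝ) (z : ℝ) :
    Polynomial.eval z ((Asub d a p).map (eval v)) =
      eval (Function.update v 1 (v 1 + eval v (Wp d a) * z)) p := by
  induction p using MvPolynomial.induction_on with
  | C c => simp [Asub]
  | add p q hp hq => simp only [Asub, map_add, Polynomial.map_add, Polynomial.eval_add, eval_add] at *; rw [hp, hq]
  | mul_X p j hp =>
      have : Asub d a (p * X j) = Asub d a p * gsub d a j := by
        simp [Asub, map_mul]
      rw [this, Polynomial.map_mul, Polynomial.eval_mul, hp, eval_mul, eval_X]
      congr 1
      rcases eq_or_ne j 1 with rfl | hne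
      · simp [gsub]
      · simp [gsub, hne, Function.update_of_ne hne]

theorem coeff0_Asub {d : ℕ} (a : ℝ) (p : MvPolynomial (Fin (d + 2)) ℝ) :
    (Asub d a p).coeff 0 = p := by
  induction p using MvPolynomial.induction_on with
  | C c => simp [Asub]
  | add p q hp hq => simp only [Asub, map_add, Polynomial.coeff_add] at *; rw [hp, hq]
  | mul_X p j hp =>
      have : Asub d a (p * X j) = Asub d a p * gsub d a j := by simp [Asub, map_mul]
      rw [this, Polynomial.mul_coeff_zero, hp]
      rcases eq_or_ne j 1 with rfl | hne
      · simp [gsub]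
      · simp [gsub, hne]

theorem coeff1_Asub {d : ℕ} (a : ℝ) (p : MvPolynomial (Fin (d + 2)) ℝ) :
    (Asub d a p).coeff 1 = Wp d a * pderiv 1 p := by
  induction p using MvPolynomial.induction_on with
  | C c => simp [Asub, pderiv_C]
  | add p q hp hq =>
      simp only [Asub, map_add, Polynomial.coeff_add] at *; rw [hp, hq]; ring
  | mul_X p j hp =>
      have h1 : Asub d a (p * X j) = Asub d a p * gsub d a j := by simp [Asub, map_mul]
      rcases eq_or_ne j 1 with rfl | hne
      · have : Asub d a p * gsub d a 1
            = Asub d a p * Polynomial.C (X 1) + Asub d a p * Polynomial.C (Wp d a) * Polynomial.X := by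
          simp [gsub]; ring
        rw [h1, this, Polynomial.coeff_add, Polynomial.coeff_mul_C, hp,
          Polynomial.coeff_mul_X, Polynomial.mul_coeff_zero]
        rw [coeff0_Asub]
        rw [pderiv_mul, pderiv_X_self, Polynomial.coeff_C_zero]
        ring
      · rw [h1]
        simp only [gsub, if_neg hne, Polynomial.coeff_mul_C, hp]
        rw [pderiv_mul, pderiv_X_of_ne hne]
        ring

theorem degWp {d : ℕ} (a : ℝ) : (Wp d a).totalDegree ≤ 1 := by
  rw [Wp, sub_eq_add_neg]
  refine (totalDegree_add _ _).trans (max_le ?_ ?_)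
  · exact le_of_eq (totalDegree_X 1)
  · rw [totalDegree_neg]
    refine (totalDegree_mul _ _).trans ?_
    rw [totalDegree_C, zero_add]
    exact (totalDegree_finset_sum _ _).trans
      (Finset.sup_le fun k _ => le_of_eq (totalDegree_X _))

theorem bnd_mul {σ : Type*} {s t : ℕ} (P Q : Polynomial (MvPolynomial σ ℝ))
    (hP : ∀ k, (P.coeff k).totalDegree ≤ s) (hQ : ∀ k, (Q.coeff k).totalDegree ≤ t) :
    ∀ k, ((P * Q).coeff k).totalDegree ≤ s + t := by
  intro k
  rw [Polynomial.coeff_mul]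
  refine (totalDegree_finset_sum _ _).trans (Finset.sup_le fun x _ => ?_)
  exact (totalDegree_mul _ _).trans (add_le_add (hP _) (hQ _))

theorem bnd_pow {σ : Type*} {s : ℕ} (P : Polynomial (MvPolynomial σ ℝ))
    (hP : ∀ k, (P.coeff k).totalDegree ≤ s) (m : ℕ) :
    ∀ k, ((P ^ m).coeff k).totalDegree ≤ m * s := by
  induction m with
  | zero =>
      intro k
      rw [pow_zero]
      rcases eq_or_ne k 0 with rfl | hk
      · simp
      · simp [Polynomial.coeff_one, hk]
  | succ m ih =>
      intro k
      rw [pow_succ, Nat.succ_mul]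
      exact bnd_mul _ _ ih hP k

theorem bnd_prod {σ ι : Type*} (t : Finset ι) (P : ι → Polynomial (MvPolynomial σ ℝ))
    (s : ι → ℕ) (h : ∀ i ∈ t, ∀ k, ((P i).coeff k).totalDegree ≤ s i) :
    ∀ k, ((∏ i ∈ t, P i).coeff k).totalDegree ≤ ∑ i ∈ t, s i := by
  classical
  induction t using Finset.induction_on with
  | empty =>
      intro k
      rcases eq_or_ne k 0 with rfl | hk
      · simp
      · simp [Polynomial.coeff_one, hk]
  | insert i t' hnot ih =>
      rw [Finset.prod_insert hnot, Finset.sum_insert hnot]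
      exact bnd_mul _ _ (h i (Finset.mem_insert_self i t'))
        (ih fun j hj k => h j (Finset.mem_insert_of_mem hj) k)

theorem bnd_gsub {d : ℕ} (a : ℝ) (i : Fin (d + 2)) :
    ∀ k, ((gsub d a i).coeff k).totalDegree ≤ 1 := by
  intro k
  rcases eq_or_ne i 1 with rfl | hne
  · simp only [gsub, if_pos rfl]
    match k with
    | 0 => simpa using le_of_eq (totalDegree_X 1)
    | 1 => simpa [Polynomial.coeff_C_mul] using degWp a
    | (n+2) => simp [Polynomial.coeff_C_mul, Polynomial.coeff_X, Polynomial.coeff_C]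
  · simp only [gsub, if_neg hne, Polynomial.coeff_C]
    split
    · exact le_of_eq (totalDegree_X i)
    · simp

theorem bnd_Asub_monomial {d : ℕ} (a : ℝ) (m : Fin (d + 2) →₀ ℕ) (c : ℝ) :
    ∀ k, ((Asub d a (monomial m c)).coeff k).totalDegree ≤ m.sum fun _ e => e := by
  intro k
  rw [Asub, aeval_monomial]
  have h1 : ∀ k, ((algebraMap ℝ (Polynomial (MvPolynomial (Fin (d + 2)) ℝ)) c).coeff k).totalDegree
      ≤ 0 := by
    intro k
    have : (algebraMap ℝ (Polynomial (MvPolynomial (Fin (d + 2)) ℝ)) c)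
        = Polynomial.C (C c) := rfl
    rw [this, Polynomial.coeff_C]
    split <;> simp
  have h2 : ∀ k, ((m.prod fun i e => gsub d a i ^ e).coeff k).totalDegree
      ≤ ∑ i ∈ m.support, m i := by
    have := bnd_prod m.support (fun i => gsub d a i ^ m i) (fun i => m i)
      (fun i _ k => by simpa using bnd_pow (gsub d a i) (bnd_gsub a i) (m i) k)
    exact this
  simpa [Finsupp.sum] using bnd_mul _ _ h1 h2 k

theorem bnd_Asub {d : ℕ} (a : ℝ) (p : MvPolynomial (Fin (d + 2)) ℝ) :
    ∀ k, ((Asub d a p).coeff k).totalDegree ≤ p.totalDegree := by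
  intro k
  have h : Asub d a p = ∑ m ∈ p.support, Asub d a (monomial m (coeff m p)) := by
    simp only [Asub]
    conv_lhs => rw [as_sum p]
    exact map_sum _ _ _
  rw [h, Polynomial.finset_sum_coeff]
  refine (totalDegree_finset_sum _ _).trans (Finset.sup_le fun m hm => ?_)
  exact (bnd_Asub_monomial a m (coeff m p) k).trans (le_totalDegree hm)

/-- If a second-order operator `G` maps `Pol_n` into `Pol_n` for all `n`, then so
does the operator `G_J = G + jump part`, provided the jump measure `F` is a
probability measure supported in `(−1, ∞)` with finite moments of all orders. -/
theorem jump_generator_polynomial_preserving (d : ℕ) (hd : 1 ≤ d) (a lam : ℝ)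
    (ha : 0 < a) (hlam : 0 ≤ lam)
    (G : ((Fin (d + 2) → ℝ) → ℝ) → ((Fin (d + 2) → ℝ) → ℝ))
    (hG : ∀ (n : ℕ) (f : (Fin (d + 2) → ℝ) → ℝ), f ∈ PolFun d n → G f ∈ PolFun d n)
    (F : Measure ℝ) [IsProbabilityMeasure F]
    (hsupp : ∀ᵐ z ∂F, -1 < z)
    (hmom : ∀ m : ℕ, Integrable (fun z => z ^ m) F) :
    ∀ (n : ℕ) (f : (Fin (d + 2) → ℝ) → ℝ), f ∈ PolFun d n →
      (fun v => G f v + jumpPart d a lam F f v) ∈ PolFun d n := by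
  intro n f hf
  obtain ⟨p, hpdeg, rfl⟩ := hf
  obtain ⟨q, hqdeg, hGq⟩ := hG n _ ⟨p, hpdeg, rfl⟩
  classical
  set N := (Asub d a p).natDegree + 1 with hN
  set μ : ℕ → ℝ := fun k => ∫ z, z ^ k ∂F with hμ
  refine ⟨q + C lam * ((∑ k ∈ Finset.range N, C (μ k) * (Asub d a p).coeff k) - p
      - C (μ 1) * ((Asub d a p).coeff 1)), ?_, ?_⟩
  · -- degree bound
    have hc : ∀ k, ((Asub d a p).coeff k).totalDegree ≤ n :=
      fun k => (bnd_Asub a p k).trans hpdeg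
    refine (totalDegree_add _ _).trans (max_le hqdeg ?_)
    refine (totalDegree_mul _ _).trans ?_
    rw [totalDegree_C, zero_add, sub_sub, sub_eq_add_neg]
    refine (totalDegree_add _ _).trans (max_le ?_ ?_)
    · refine (totalDegree_finset_sum _ _).trans (Finset.sup_le fun k _ => ?_)
      exact (totalDegree_mul _ _).trans (by simpa [totalDegree_C] using hc k)
    · rw [totalDegree_neg]
      refine (totalDegree_add _ _).trans (max_le hpdeg ?_)
      exact (totalDegree_mul _ _).trans (by simpa [totalDegree_C] using hc 1)
  · -- function equality
    funext v
    have hGv : G (fun v => eval v p) v = eval v q := by rw [hGq]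
    have hD : fderiv ℝ (fun w => eval w p) v (Pi.single 1 1) = eval v (pderiv 1 p) :=
      fderiv_mveval_single p v 1
    have hfun : ∀ z : ℝ,
        eval (Function.update v 1
          (v 1 + (v 1 - (∑ k : Fin d, v k.succ.succ) / a) * z)) p
          = ∑ k ∈ Finset.range N, eval v ((Asub d a p).coeff k) * z ^ k := by
      intro z
      rw [← eval_Wp a v, ← eval_Asub a p v z]
      have hlt : ((Asub d a p).map (eval v)).natDegree < N :=
        Nat.lt_succ_of_le Polynomial.natDegree_map_le
      rw [Polynomial.eval_eq_sum_range' hlt]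
      simp [Polynomial.coeff_map]
    have hint : (fun z : ℝ =>
        ((fun v => eval v p) (Function.update v 1
          (v 1 + (v 1 - (∑ k : Fin d, v k.succ.succ) / a) * z))
          - (fun v => eval v p) v
          - (v 1 - (∑ k : Fin d, v k.succ.succ) / a) * z
            * fderiv ℝ (fun v => eval v p) v (Pi.single 1 1)))
        = fun z : ℝ => ((∑ k ∈ Finset.range N, eval v ((Asub d a p).coeff k) * z ^ k)
          - eval v p - eval v ((Asub d a p).coeff 1) * z) := by
      funext z
      simp only
      rw [hfun z, hD, coeff1_Asub, eval_mul, eval_Wp]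
      ring
    have h1 : Integrable
        (fun z : ℝ => ∑ k ∈ Finset.range N, eval v ((Asub d a p).coeff k) * z ^ k) F :=
      integrable_finset_sum _ fun k _ => (hmom k).const_mul _
    have h2 : Integrable (fun _ : ℝ => eval v p) F := integrable_const _
    have h3 : Integrable (fun z : ℝ => eval v ((Asub d a p).coeff 1) * z) F := by
      simpa [pow_one] using (hmom 1).const_mul (eval v ((Asub d a p).coeff 1))
    have hI : ∫ z, ((∑ k ∈ Finset.range N, eval v ((Asub d a p).coeff k) * z ^ k)
          - eval v p - eval v ((Asub d a p).coeff 1) * z) ∂F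
        = (∑ k ∈ Finset.range N, eval v ((Asub d a p).coeff k) * μ k)
          - eval v p - eval v ((Asub d a p).coeff 1) * μ 1 := by
      have h12 : Integrable (fun z : ℝ =>
          (∑ k ∈ Finset.range N, eval v ((Asub d a p).coeff k) * z ^ k) - eval v p) F :=
        h1.sub h2
      rw [integral_sub h12 h3, integral_sub h1 h2,
        integral_finset_sum _ fun k _ => (hmom k).const_mul _]
      rw [show (fun z : ℝ => eval v ((Asub d a p).coeff 1) * z)
          = fun z : ℝ => eval v ((Asub d a p).coeff 1) * id z from rfl, integral_const_mul]
      simp [integral_const_mul, hμ, pow_one, id]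
    have hJ : jumpPart d a lam F (fun v => eval v p) v
        = lam * ((∑ k ∈ Finset.range N, eval v ((Asub d a p).coeff k) * μ k)
          - eval v p - eval v ((Asub d a p).coeff 1) * μ 1) := by
      rw [jumpPart, hint, hI]
    rw [hGv, hJ]
    simp only [eval_add, eval_mul, eval_C, eval_sub, map_sum]
    have hcomm : ∀ x, μ x * eval v ((Asub d a p).coeff x)
        = eval v ((Asub d a p).coeff x) * μ x := fun x => mul_comm _ _
    simp only [hcomm]
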